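/- (Anyon–Bose expansion of the reduced density matrix, ordering $O_-$.) Let $\kappa \in \mathbb{R}$, $L>0$, $V = [-L/2, L/2]$, $N \ge n \ge 1$, and let $\chi: \mathbb{R}^N \to \mathbb{C}$ be continuous and totally symmetric. Let $x_1' < x_1 < \cdots < x_n' < x_n$ be points of $V$ and set $I_- = [x_1',x_1] \cup \cdots \cup [x_n',x_n]$. Define $\chi^a = A_\kappa\, \chi$ and the statistics constant $C_- = A_{-\kappa}(x_1',\dots,x_n')\, A_\kappa(x_1,\dots,x_n)$. Then $\int_{V^{N-n}} \overline{\chi^a(z_1,\dots,z_{N-n}, x_1',\dots,x_n')}\, \chi^a(z_1,\dots,z_{N-n}, x_1,\dots,x_n)\, dz = C_- \sum_{j=0}^{N-n} (-1)^j (1 - e^{-i\pi\kappa})^j \binom{N-n}{j} \int_{I_-^{\,j}} dw \int_{V^{N-n-j}} dz\, \overline{\chi(w_1,\dots,w_j, z_1,\dots,z_{N-n-j}, x_1',\dots,x_n')}\, \chi(w_1,\dots,w_j, z_1,\dots,z_{N-n-j}, x_1,\dots,x_n)$. -/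

import Mathlib

open MeasureTheory
open scoped Classical

/-- The statistics factor `A_κ(z₁,…,z_N) = exp(iπκ ∑_{j<k} ε(z_j - z_k)/2)`. -/
noncomputable def Afac (κ : ℝ) {N : ℕ} (z : Fin N → ℝ) : ℂ :=
  Complex.exp (Complex.I * Real.pi * κ *
    (∑ j : Fin N, ∑ k ∈ Finset.univ.filter (fun k => j < k), Real.sign (z j - z k)) / 2)

noncomputable def Tsum {N : ℕ} (w : Fin N → ℝ) : ℝ :=
  ∑ j : Fin N, ∑ k ∈ Finset.univ.filter (fun k => j < k), Real.sign (w j - w k)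

lemma Afac_eq (κ : ℝ) {N : ℕ} (w : Fin N → ℝ) :
    Afac κ w = Complex.exp (Complex.I * Real.pi * κ * (Tsum w : ℝ) / 2) := by
  unfold Afac Tsum
  push_cast
  ring_nf

lemma Tsum_append {m n : ℕ} (z : Fin m → ℝ) (x : Fin n → ℝ) :
    Tsum (Fin.append z x)
      = Tsum z + (∑ i : Fin m, ∑ l : Fin n, Real.sign (z i - x l)) + Tsum x := by
  unfold Tsum
  simp only [Finset.sum_filter]
  rw [Fin.sum_univ_add]
  have h1 : ∀ j : Fin (m + n),
      (∑ k : Fin (m + n), if j < k then Real.sign (Fin.append z x j - Fin.append z x k) else 0)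
        = (∑ k : Fin m, if j < Fin.castAdd n k then Real.sign (Fin.append z x j - z k) else 0)
          + ∑ k : Fin n, if j < Fin.natAdd m k then Real.sign (Fin.append z x j - x k) else 0 := by
    intro j
    rw [Fin.sum_univ_add]
    simp [Fin.append_left, Fin.append_right]
  simp only [h1]
  simp only [Fin.append_left, Fin.append_right, Finset.sum_add_distrib]
  have hA : (∑ i : Fin m, ∑ k : Fin m,
      if Fin.castAdd n i < Fin.castAdd n k then Real.sign (z i - z k) else 0)
      = ∑ i : Fin m, ∑ k : Fin m, if i < k then Real.sign (z i - z k) else 0 := by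
    apply Finset.sum_congr rfl; intro i _; apply Finset.sum_congr rfl; intro k _
    rcases lt_or_ge i k with h | h
    · rw [if_pos h, if_pos (by rw [Fin.lt_def, Fin.coe_castAdd, Fin.coe_castAdd]; exact h)]
    · rw [if_neg (not_lt.2 h), if_neg (fun hc => absurd (by rw [Fin.lt_def, Fin.coe_castAdd, Fin.coe_castAdd] at hc; exact hc) (not_lt.2 h))]
  have hB : (∑ i : Fin m, ∑ l : Fin n,
      if Fin.castAdd n i < Fin.natAdd m l then Real.sign (z i - x l) else 0)
      = ∑ i : Fin m, ∑ l : Fin n, Real.sign (z i - x l) := by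
    apply Finset.sum_congr rfl; intro i _; apply Finset.sum_congr rfl; intro l _
    rw [if_pos]
    simp only [Fin.lt_def, Fin.coe_castAdd, Fin.coe_natAdd]
    have := i.isLt; omega
  have hC : (∑ l : Fin n, ∑ k : Fin m,
      if Fin.natAdd m l < Fin.castAdd n k then Real.sign (x l - z k) else 0) = 0 := by
    apply Finset.sum_eq_zero; intro l _; apply Finset.sum_eq_zero; intro k _
    rw [if_neg]
    simp only [Fin.lt_def, Fin.coe_castAdd, Fin.coe_natAdd]
    have := k.isLt; omega
  have hD : (∑ l : Fin n, ∑ l' : Fin n,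
      if Fin.natAdd m l < Fin.natAdd m l' then Real.sign (x l - x l') else 0)
      = ∑ l : Fin n, ∑ l' : Fin n, if l < l' then Real.sign (x l - x l') else 0 := by
    apply Finset.sum_congr rfl; intro l _; apply Finset.sum_congr rfl; intro l' _
    rcases lt_or_ge l l' with h | h
    · rw [if_pos h, if_pos (by rw [Fin.lt_def, Fin.coe_natAdd, Fin.coe_natAdd]; exact Nat.add_lt_add_left h m)]
    · rw [if_neg (not_lt.2 h), if_neg (fun hc => absurd (by rw [Fin.lt_def, Fin.coe_natAdd, Fin.coe_natAdd] at hc; exact Nat.lt_of_add_lt_add_left hc) (not_lt.2 h))]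
  rw [hA, hB, hC, hD]
  ring

lemma continuous_appendLeft {m n : ℕ} (y : Fin n → ℝ) :
    Continuous fun z : Fin m → ℝ => Fin.append z y := by
  apply continuous_pi
  intro i
  refine Fin.addCases (motive := fun i => Continuous fun z : Fin m → ℝ => Fin.append z y i)
    (fun i => ?_) (fun i => ?_) i
  · simp only [Fin.append_left]; exact continuous_apply i
  · simp only [Fin.append_right]; exact continuous_const

lemma append_comp {m n : ℕ} (z : Fin m → ℝ) (y : Fin n → ℝ) (e : Equiv.Perm (Fin m)) :
    Fin.append (z ∘ e) y = (Fin.append z y) ∘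
      (finSumFinEquiv.symm.trans ((e.sumCongr (Equiv.refl (Fin n))).trans finSumFinEquiv)) := by
  funext i
  refine Fin.addCases (motive := fun i => Fin.append (z ∘ e) y i = _) (fun i => ?_) (fun i => ?_) i
  · simp [Fin.append_left, finSumFinEquiv_symm_apply_castAdd]
  · simp [Fin.append_right, finSumFinEquiv_symm_apply_natAdd]

lemma card_filter_lt (m j : ℕ) (hj : j ≤ m) :
    (Finset.univ.filter (fun i : Fin m => (i : ℕ) < j)).card = j := by
  rw [Finset.card_filter]
  rw [Fin.sum_univ_eq_sum_range (fun i => if i < j then 1 else 0) m]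
  rw [← Finset.card_filter]
  have : Finset.filter (fun i => i < j) (Finset.range m) = Finset.range j := by
    ext k; simp only [Finset.mem_filter, Finset.mem_range]; omega
  rw [this, Finset.card_range]

lemma exists_perm {α : Type*} [Fintype α] [DecidableEq α] (S T : Finset α)
    (h : S.card = T.card) : ∃ σ : Equiv.Perm α, ∀ i, σ i ∈ T ↔ i ∈ S := by
  have e1 : {i // i ∈ S} ≃ {i // i ∈ T} :=
    Fintype.equivOfCardEq (by rw [Fintype.card_coe, Fintype.card_coe, h])
  have e2 : {i // ¬ i ∈ S} ≃ {i // ¬ i ∈ T} := by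
    refine Fintype.equivOfCardEq ?_
    rw [Fintype.card_subtype_compl, Fintype.card_subtype_compl]
    rw [Fintype.card_coe, Fintype.card_coe, h]
  refine ⟨(Equiv.sumCompl (· ∈ S)).symm.trans ((e1.sumCongr e2).trans
    (Equiv.sumCompl (· ∈ T))), fun i => ?_⟩
  by_cases h : i ∈ S
  · simp [Equiv.sumCompl_symm_apply_of_pos h, (e1 ⟨i, h⟩).2, h]
  · simp [Equiv.sumCompl_symm_apply_of_neg h, (e2 ⟨i, h⟩).2, h]

lemma sign_diff_eq {n : ℕ} (x x' : Fin n → ℝ) (hx'x : ∀ j, x' j < x j)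
    (hchain : ∀ j k : Fin n, j < k → x j < x' k) (t : ℝ)
    (ht : ∀ l, t ≠ x l ∧ t ≠ x' l) :
    (∑ l, (Real.sign (t - x l) - Real.sign (t - x' l)))
      = if t ∈ ⋃ l, Set.Icc (x' l) (x l) then (-2 : ℝ) else 0 := by
  have hterm : ∀ l, Real.sign (t - x l) - Real.sign (t - x' l)
      = if t ∈ Set.Icc (x' l) (x l) then (-2:ℝ) else 0 := by
    intro l
    rcases (ht l).1.lt_or_gt with h1 | h1
    · rcases (ht l).2.lt_or_gt with h2 | h2
      · rw [Real.sign_of_neg (by linarith), Real.sign_of_neg (by linarith),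
          if_neg (by simp only [Set.mem_Icc, not_and, not_le]; intro h; linarith)]
        ring
      · rw [Real.sign_of_neg (by linarith), Real.sign_of_pos (by linarith),
          if_pos (Set.mem_Icc.2 ⟨le_of_lt h2, le_of_lt h1⟩)]
        norm_num
    · have h2 : x' l < t := lt_trans (hx'x l) h1
      rw [Real.sign_of_pos (by linarith), Real.sign_of_pos (by linarith),
        if_neg (by simp only [Set.mem_Icc, not_and, not_le]; intro h; linarith)]
      ring
  simp only [hterm]
  by_cases hmem : t ∈ ⋃ l, Set.Icc (x' l) (x l)
  · rw [if_pos hmem]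
    obtain ⟨l₀, hl₀⟩ : ∃ l, t ∈ Set.Icc (x' l) (x l) := by simpa using hmem
    rw [Finset.sum_eq_single l₀]
    · rw [if_pos hl₀]
    · intro l _ hne
      rw [if_neg]
      intro hl
      rcases hne.lt_or_gt with hlt | hlt
      · have hc := hchain l l₀ hlt
        have h2 := hl.2; have h3 := hl₀.1
        linarith
      · have hc := hchain l₀ l hlt
        have h2 := hl₀.2; have h3 := hl.1
        linarith
    · intro h; exact absurd (Finset.mem_univ l₀) h
  · rw [if_neg hmem]
    apply Finset.sum_eq_zero
    intro l _
    rw [if_neg (fun hl => hmem (Set.mem_iUnion.2 ⟨l, hl⟩))]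

lemma stat_key {m n : ℕ} (κ : ℝ) (x x' : Fin n → ℝ) (hx'x : ∀ j, x' j < x j)
    (hchain : ∀ j k : Fin n, j < k → x j < x' k)
    (z : Fin m → ℝ) (hz : ∀ i l, z i ≠ x l ∧ z i ≠ x' l) :
    (starRingEnd ℂ) (Afac κ (Fin.append z x')) * Afac κ (Fin.append z x)
      = Afac (-κ) x' * Afac κ x *
        ∏ i, (if z i ∈ ⋃ l, Set.Icc (x' l) (x l)
          then Complex.exp (-(Complex.I * Real.pi * κ)) else 1) := by
  classical
  have hind : ∀ i : Fin m,
      (if z i ∈ ⋃ l, Set.Icc (x' l) (x l)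
        then Complex.exp (-(Complex.I * Real.pi * κ)) else 1)
        = Complex.exp (Complex.I * Real.pi * κ *
            ((if z i ∈ ⋃ l, Set.Icc (x' l) (x l) then (-2:ℝ) else 0 : ℝ) : ℂ) / 2) := by
    intro i
    by_cases h : z i ∈ ⋃ l, Set.Icc (x' l) (x l)
    · rw [if_pos h, if_pos h]
      congr 1
      push_cast
      ring
    · rw [if_neg h, if_neg h]
      simp
  simp only [hind]
  rw [← Complex.exp_sum]
  rw [Afac_eq, Afac_eq, Afac_eq, Afac_eq, ← Complex.exp_conj, ← Complex.exp_add,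
    ← Complex.exp_add, ← Complex.exp_add]
  congr 1
  have hsum : (∑ i : Fin m, (if z i ∈ ⋃ l, Set.Icc (x' l) (x l) then (-2:ℝ) else 0))
      = (∑ i : Fin m, ∑ l, Real.sign (z i - x l))
        - ∑ i : Fin m, ∑ l, Real.sign (z i - x' l) := by
    rw [← Finset.sum_sub_distrib]
    apply Finset.sum_congr rfl
    intro i _
    rw [← Finset.sum_sub_distrib, sign_diff_eq x x' hx'x hchain (z i) (hz i)]
  have hr : Tsum (Fin.append z x) = Tsum (Fin.append z x') - Tsum x' + Tsum x
      + ∑ i : Fin m, (if z i ∈ ⋃ l, Set.Icc (x' l) (x l) then (-2:ℝ) else 0) := by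
    rw [Tsum_append, Tsum_append, hsum]
    ring
  have hconj : (starRingEnd ℂ) (Complex.I * (Real.pi : ℂ) * (κ : ℂ)
      * ((Tsum (Fin.append z x') : ℝ) : ℂ) / 2)
      = -(Complex.I * (Real.pi : ℂ) * (κ : ℂ) * ((Tsum (Fin.append z x') : ℝ) : ℂ) / 2) := by
    simp [map_div₀, map_mul, Complex.conj_I, Complex.conj_ofReal, map_ofNat]
    ring
  rw [hconj, hr]
  have hcast : ((Tsum (Fin.append z x') - Tsum x' + Tsum x
      + ∑ i : Fin m, (if z i ∈ ⋃ l, Set.Icc (x' l) (x l) then (-2:ℝ) else 0) : ℝ) : ℂ)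
      = ((Tsum (Fin.append z x') : ℝ) : ℂ) - ((Tsum x' : ℝ) : ℂ) + ((Tsum x : ℝ) : ℂ)
        + ∑ i : Fin m, ((if z i ∈ ⋃ l, Set.Icc (x' l) (x l) then (-2:ℝ) else 0 : ℝ) : ℂ) := by
    push_cast
    ring
  rw [hcast]
  have haux : (∑ i : Fin m, Complex.I * (Real.pi : ℂ) * (κ : ℂ)
      * ((if z i ∈ ⋃ l, Set.Icc (x' l) (x l) then (-2:ℝ) else 0 : ℝ) : ℂ) / 2)
      = Complex.I * (Real.pi : ℂ) * (κ : ℂ)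
        * (∑ i : Fin m, ((if z i ∈ ⋃ l, Set.Icc (x' l) (x l) then (-2:ℝ) else 0 : ℝ) : ℂ)) / 2 := by
    rw [← Finset.sum_div, ← Finset.mul_sum]
  rw [haux]
  push_cast
  ring

/-- Anyon–Bose expansion of the `n`-particle reduced density matrix, ordering `O₋`
(`x₁' < x₁ < ⋯ < xₙ' < xₙ`, `I₋ = ⋃ₗ [xₗ', xₗ]`), with `N = m + n` particles on
`V = [-L/2, L/2]` and `χᵃ = A_κ χ` for a continuous totally symmetric `χ`. -/
theorem anyon_bose_rdm_minus (κ L : ℝ) (hL : 0 < L) (m n : ℕ) (hn : 1 ≤ n)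
    (χ : (Fin (m + n) → ℝ) → ℂ) (hcont : Continuous χ)
    (hsym : ∀ (π : Equiv.Perm (Fin (m + n))) (z : Fin (m + n) → ℝ), χ (z ∘ π) = χ z)
    (x x' : Fin n → ℝ)
    (hxV : ∀ j, x j ∈ Set.Icc (-(L / 2)) (L / 2))
    (hx'V : ∀ j, x' j ∈ Set.Icc (-(L / 2)) (L / 2))
    (hx'x : ∀ j, x' j < x j) (hchain : ∀ j k : Fin n, j < k → x j < x' k) :
    (∫ z in Set.univ.pi (fun _ : Fin m => Set.Icc (-(L / 2)) (L / 2)),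
        (starRingEnd ℂ) (Afac κ (Fin.append z x') * χ (Fin.append z x')) *
          (Afac κ (Fin.append z x) * χ (Fin.append z x)))
      = (Afac (-κ) x' * Afac κ x) *
          ∑ j ∈ Finset.range (m + 1),
            (-1) ^ j * (1 - Complex.exp (-(Complex.I * Real.pi * κ))) ^ j * (m.choose j : ℂ) *
              ∫ z in Set.univ.pi (fun i : Fin m =>
                  if (i : ℕ) < j then ⋃ l, Set.Icc (x' l) (x l)
                  else Set.Icc (-(L / 2)) (L / 2)),
                (starRingEnd ℂ) (χ (Fin.append z x')) * χ (Fin.append z x) := by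
  classical
  set V : Set ℝ := Set.Icc (-(L / 2)) (L / 2) with hV
  set Iset : Set ℝ := ⋃ l, Set.Icc (x' l) (x l) with hIset
  set G : (Fin m → ℝ) → ℂ :=
    fun z => (starRingEnd ℂ) (χ (Fin.append z x')) * χ (Fin.append z x) with hG
  set c : ℂ := Complex.exp (-(Complex.I * Real.pi * κ)) - 1 with hc
  have hImeas : MeasurableSet Iset := MeasurableSet.iUnion fun l => measurableSet_Icc
  have hIV : Iset ⊆ V := Set.iUnion_subset fun l => Set.Icc_subset_Icc (hx'V l).1 (hxV l).2
  have hVpi : MeasurableSet (Set.univ.pi fun _ : Fin m => V) :=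
    MeasurableSet.univ_pi fun _ => measurableSet_Icc
  have hGcont : Continuous G := by
    apply Continuous.mul
    · exact Complex.continuous_conj.comp (hcont.comp (continuous_appendLeft x'))
    · exact hcont.comp (continuous_appendLeft x)
  have hGint : IntegrableOn G (Set.univ.pi fun _ : Fin m => V) :=
    hGcont.continuousOn.integrableOn_compact (isCompact_univ_pi fun _ => isCompact_Icc)
  have hae : ∀ᵐ z : Fin m → ℝ, ∀ (i : Fin m) (l : Fin n), z i ≠ x l ∧ z i ≠ x' l := by
    rw [ae_all_iff]
    intro i
    rw [ae_all_iff]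
    intro l
    have h1 : ∀ cc : ℝ, ∀ᵐ z : Fin m → ℝ, z i ≠ cc := by
      intro cc
      rw [MeasureTheory.volume_pi]
      exact Measure.ae_eval_ne (fun _ : Fin m => (volume : Measure ℝ)) i cc
    exact (h1 (x l)).and (h1 (x' l))
  have stepA : (∫ z in Set.univ.pi (fun _ : Fin m => V),
      (starRingEnd ℂ) (Afac κ (Fin.append z x') * χ (Fin.append z x')) *
        (Afac κ (Fin.append z x) * χ (Fin.append z x)))
      = ∫ z in Set.univ.pi (fun _ : Fin m => V),
          (Afac (-κ) x' * Afac κ x) *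
            ((∏ i, (if z i ∈ Iset then Complex.exp (-(Complex.I * Real.pi * κ)) else 1))
              * G z) := by
    apply setIntegral_congr_ae hVpi
    filter_upwards [hae] with z hz _
    have hkey := stat_key κ x x' hx'x hchain z (fun i l => hz i l)
    rw [← hIset] at hkey
    rw [map_mul]
    calc (starRingEnd ℂ) (Afac κ (Fin.append z x')) * (starRingEnd ℂ) (χ (Fin.append z x'))
          * (Afac κ (Fin.append z x) * χ (Fin.append z x))
        = ((starRingEnd ℂ) (Afac κ (Fin.append z x')) * Afac κ (Fin.append z x)) * G z := by
          rw [hG]; ring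
      _ = _ := by rw [hkey]; ring
  rw [stepA]
  rw [integral_const_mul]
  congr 1
  have hprod : ∀ z : Fin m → ℝ,
      ((∏ i, (if z i ∈ Iset then Complex.exp (-(Complex.I * Real.pi * κ)) else 1)) * G z)
        = ∑ S ∈ (Finset.univ : Finset (Fin m)).powerset,
            c ^ S.card * (((S : Set (Fin m)).pi fun _ => Iset).indicator G) z := by
    intro z
    have h1 : ∀ i : Fin m,
        (if z i ∈ Iset then Complex.exp (-(Complex.I * Real.pi * κ)) else 1)
          = c * (if z i ∈ Iset then 1 else 0) + 1 := by
      intro i; by_cases h : z i ∈ Iset <;> simp [h, hc]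
    simp only [h1]
    rw [Finset.prod_add, Finset.sum_mul]
    apply Finset.sum_congr rfl
    intro S _
    rw [Finset.prod_const_one, mul_one, Finset.prod_mul_distrib, Finset.prod_const,
      Finset.prod_boole]
    by_cases hmem : ∀ i ∈ S, z i ∈ Iset
    · rw [if_pos hmem, Set.indicator_of_mem (by simpa [Set.mem_pi] using hmem)]
      ring
    · rw [if_neg hmem, Set.indicator_of_notMem (by simpa [Set.mem_pi] using hmem)]
      ring
  rw [setIntegral_congr_fun hVpi (fun z _ => hprod z)]
  rw [integral_finset_sum _ (fun S _ =>
    ((hGint.indicator (MeasurableSet.pi (Set.to_countable _) fun _ _ => hImeas)).const_mul _))]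
  have hSint : ∀ S : Finset (Fin m),
      (∫ z in Set.univ.pi fun _ : Fin m => V,
        c ^ S.card * (((S : Set (Fin m)).pi fun _ => Iset).indicator G) z)
        = c ^ S.card * ∫ z in Set.univ.pi (fun i : Fin m => if i ∈ S then Iset else V), G z := by
    intro S
    rw [integral_const_mul]
    congr 1
    rw [integral_indicator (MeasurableSet.pi (Set.to_countable _) fun _ _ => hImeas)]
    rw [Measure.restrict_restrict (MeasurableSet.pi (Set.to_countable _) fun _ _ => hImeas)]
    have hseteq : ((S : Set (Fin m)).pi fun _ => Iset) ∩ (Set.univ.pi fun _ : Fin m => V)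
        = Set.univ.pi (fun i : Fin m => if i ∈ S then Iset else V) := by
      ext zz
      simp only [Set.mem_inter_iff, Set.mem_pi, Set.mem_univ, forall_true_left,
        Finset.mem_coe, true_implies]
      constructor
      · rintro ⟨h1', h2'⟩ i
        by_cases hi : i ∈ S
        · rw [if_pos hi]; exact h1' i hi
        · rw [if_neg hi]; exact h2' i
      · intro h
        refine ⟨fun i hi => ?_, fun i => ?_⟩
        · have := h i; rwa [if_pos hi] at this
        · by_cases hi : i ∈ S
          · have := h i; rw [if_pos hi] at this; exact hIV this
          · have := h i; rwa [if_neg hi] at this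
    rw [hseteq]
  simp only [hSint]
  have hsymInt : ∀ S : Finset (Fin m),
      (∫ z in Set.univ.pi (fun i : Fin m => if i ∈ S then Iset else V), G z)
        = ∫ z in Set.univ.pi (fun i : Fin m => if (i : ℕ) < S.card then Iset else V), G z := by
    intro S
    have hcard : S.card ≤ m := by
      simpa using Finset.card_le_univ S
    obtain ⟨σ, hσ⟩ := exists_perm (Finset.univ.filter (fun i : Fin m => (i : ℕ) < S.card)) S
      (by rw [card_filter_lt m S.card hcard])
    set E := MeasurableEquiv.piCongrLeft (fun _ : Fin m => ℝ) σ with hE0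
    have hmp : MeasurePreserving E volume volume :=
      volume_measurePreserving_piCongrLeft _ σ
    have hE : ∀ z : Fin m → ℝ, E z = z ∘ ⇑σ.symm := by
      intro z; funext i
      obtain ⟨a, rfl⟩ : ∃ a, σ a = i := ⟨σ.symm i, σ.apply_symm_apply i⟩
      have h1 : E z (σ a) = z a := Equiv.piCongrLeft_apply_apply (fun _ => ℝ) σ z a
      rw [h1]
      simp
    rw [← hmp.setIntegral_preimage_emb E.measurableEmbedding G
      (Set.univ.pi (fun i : Fin m => if i ∈ S then Iset else V))]
    have hGE : ∀ z : Fin m → ℝ, G (E z) = G z := by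
      intro z
      rw [hE z]
      show (starRingEnd ℂ) (χ (Fin.append (z ∘ ⇑σ.symm) x')) * χ (Fin.append (z ∘ ⇑σ.symm) x)
        = (starRingEnd ℂ) (χ (Fin.append z x')) * χ (Fin.append z x)
      rw [append_comp z x' σ.symm, append_comp z x σ.symm, hsym, hsym]
    have hpre : E ⁻¹' (Set.univ.pi (fun i : Fin m => if i ∈ S then Iset else V))
        = Set.univ.pi (fun i : Fin m => if (i : ℕ) < S.card then Iset else V) := by
      ext z
      simp only [Set.mem_preimage, Set.mem_pi, Set.mem_univ, true_implies]
      constructor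
      · intro h i
        have h2 := h (σ i)
        rw [hE z] at h2
        simp only [Function.comp_apply, Equiv.symm_apply_apply] at h2
        by_cases hi : (i : ℕ) < S.card
        · rw [if_pos ((hσ i).2 (by simp [hi]))] at h2
          rw [if_pos hi]; exact h2
        · rw [if_neg (fun hcc => hi (by simpa using (hσ i).1 hcc))] at h2
          rw [if_neg hi]; exact h2
      · intro h i
        rw [hE z]
        simp only [Function.comp_apply]
        have hiff : i ∈ S ↔ ((σ.symm i : Fin m) : ℕ) < S.card := by
          have h3 := hσ (σ.symm i)
          rw [σ.apply_symm_apply] at h3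
          simpa using h3
        have h2 := h (σ.symm i)
        by_cases hi : i ∈ S
        · rw [if_pos (hiff.1 hi)] at h2
          rw [if_pos hi]; exact h2
        · rw [if_neg (fun hcc => hi (hiff.2 hcc))] at h2
          rw [if_neg hi]; exact h2
    rw [hpre]
    exact setIntegral_congr_fun (MeasurableSet.univ_pi fun i => by
      by_cases hi : (i : ℕ) < S.card
      · rw [if_pos hi]; exact hImeas
      · rw [if_neg hi]; exact measurableSet_Icc) (fun z _ => hGE z)
  simp only [hsymInt]
  rw [Finset.sum_powerset_apply_card (f := fun j => c ^ j *
    ∫ z in Set.univ.pi (fun i : Fin m => if (i : ℕ) < j then Iset else V), G z)]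
  rw [Finset.card_univ, Fintype.card_fin]
  apply Finset.sum_congr rfl
  intro j _
  rw [nsmul_eq_mul]
  have hcpow : (-1 : ℂ) ^ j * (1 - Complex.exp (-(Complex.I * Real.pi * κ))) ^ j = c ^ j := by
    rw [← mul_pow]
    congr 1
    rw [hc]
    ring
  rw [← hcpow]
  ring
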